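/- If F : ℤ → [0,1] vanishes for x < M with M > 0 and satisfies F(x) = Σ_{j=M}^{x+D} f(x-j) F(j) for x ≥ M, where f is a probability mass function supported on {-D, -D+1, ...} with f(-D) > 0, then the generating function Ξ̃(s) = Σ_{j≥M} F(j) s^{j-M} satisfies Ξ̃(s)·s^D·(G(s) - 1) = Σ_{j=M}^{M+D-1} F(j) Σ_{x=j}^{M+D-1} f(x-D-j) s^{x-M} for all |s| < 1, s ≠ 0, where G(s) = Σ_{k≥-D} f(k) s^k. -/

import Mathlib

/-- Generating-function identity (case `M > 0`): if `F` vanishes below `M > 0` and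
satisfies `F(x) = ∑_{j=M}^{x+D} f(x-j) F(j)` for `x ≥ M`, with `f` a pmf supported on
`{-D, -D+1, …}` and `f(-D) > 0`, then for `|s| < 1`, `s ≠ 0`,
`Ξ̃(s)·s^D·(G(s) - 1) = ∑_{j=M}^{M+D-1} F(j) ∑_{x=j}^{M+D-1} f(x-D-j) s^{x-M}`,
where `Ξ̃(s) = ∑_{j≥M} F(j) s^{j-M}` and `G(s) = ∑_{k≥-D} f(k) s^k`. -/
theorem generating_function_identity_M_pos (D : ℕ) (hD : 1 ≤ D)
    (M : ℤ) (hM : 0 < M)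
    (f : ℤ → ℝ) (hf0 : ∀ j, 0 ≤ f j) (hf1 : ∀ j, f j ≤ 1)
    (hfsupp : ∀ j : ℤ, j < -(D : ℤ) → f j = 0)
    (hfD : 0 < f (-(D : ℤ)))
    (hfsum : HasSum (fun k : ℕ => f ((k : ℤ) - D)) 1)
    (F : ℤ → ℝ) (hF01 : ∀ x, 0 ≤ F x ∧ F x ≤ 1)
    (hFzero : ∀ x : ℤ, x < M → F x = 0)
    (hFrec : ∀ x : ℤ, M ≤ x →
      F x = ∑ j ∈ Finset.Icc M (x + D), f (x - j) * F j) :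
    ∀ s : ℂ, ‖s‖ < 1 → s ≠ 0 →
      (∑' j : ℕ, (F (M + j) : ℂ) * s ^ j) * s ^ D *
          ((∑' k : ℕ, (f ((k : ℤ) - D) : ℂ) * s ^ ((k : ℤ) - D)) - 1) =
        ∑ j ∈ Finset.Icc M (M + D - 1), (F j : ℂ) *
          ∑ x ∈ Finset.Icc j (M + D - 1), (f (x - D - j) : ℂ) * s ^ (x - M) := by
  intro s hs hs0
  have hsD : (s : ℂ) ^ D ≠ 0 := pow_ne_zero _ hs0
  set a : ℕ → ℂ := fun n => (F (M + n) : ℂ) * s ^ n with ha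
  set b : ℕ → ℂ := fun n => (f ((n : ℤ) - D) : ℂ) * s ^ n with hb
  -- geometric bound helpers
  have hgeom : Summable fun n : ℕ => ‖s‖ ^ n := summable_geometric_of_lt_one (norm_nonneg s) hs
  have hna : Summable fun n => ‖a n‖ := by
    refine hgeom.of_nonneg_of_le (fun n => norm_nonneg _) (fun n => ?_)
    rw [ha]; simp only [norm_mul, norm_pow]
    have h1 : ‖((F (M + n) : ℝ) : ℂ)‖ ≤ 1 := by
      rw [Complex.norm_real, Real.norm_eq_abs, abs_le]
      exact ⟨by linarith [(hF01 (M + n)).1], (hF01 (M + n)).2⟩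
    calc ‖((F (M + n) : ℝ) : ℂ)‖ * ‖s‖ ^ n ≤ 1 * ‖s‖ ^ n := by
          exact mul_le_mul_of_nonneg_right h1 (by positivity)
      _ = ‖s‖ ^ n := one_mul _
  have hnb : Summable fun n => ‖b n‖ := by
    refine hgeom.of_nonneg_of_le (fun n => norm_nonneg _) (fun n => ?_)
    rw [hb]; simp only [norm_mul, norm_pow]
    have h1 : ‖((f ((n : ℤ) - D) : ℝ) : ℂ)‖ ≤ 1 := by
      rw [Complex.norm_real, Real.norm_eq_abs, abs_le]
      exact ⟨by linarith [hf0 ((n : ℤ) - D)], hf1 _⟩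
    calc ‖((f ((n : ℤ) - D) : ℝ) : ℂ)‖ * ‖s‖ ^ n ≤ 1 * ‖s‖ ^ n := by
          exact mul_le_mul_of_nonneg_right h1 (by positivity)
      _ = ‖s‖ ^ n := one_mul _
  have hsa : Summable a := hna.of_norm
  have hsb : Summable b := hnb.of_norm
  -- rewrite the zpow series
  have hG : (∑' k : ℕ, (f ((k : ℤ) - D) : ℂ) * s ^ ((k : ℤ) - D))
      = (∑' k, b k) * (s ^ D)⁻¹ := by
    rw [← tsum_mul_right]
    congr 1; funext k
    rw [hb]
    have : s ^ ((k : ℤ) - (D : ℤ)) = s ^ (k : ℤ) / s ^ (D : ℤ) := zpow_sub₀ hs0 _ _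
    rw [this, zpow_natCast, zpow_natCast]
    ring
  -- Cauchy product coefficients
  set c : ℕ → ℂ := fun n => ∑ k ∈ Finset.range (n + 1), a k * b (n - k) with hcdef
  have hnc : Summable fun n => ‖c n‖ := summable_norm_sum_mul_range_of_summable_norm hna hnb
  have hsc : Summable c := hnc.of_norm
  have hprod : (∑' n, a n) * (∑' n, b n) = ∑' n, c n :=
    tsum_mul_tsum_eq_tsum_sum_range_of_summable_norm hna hnb
  -- the shifted series
  set g : ℕ → ℂ := fun n => (if D ≤ n then (F (M + n - D) : ℂ) else 0) * s ^ n with hgdef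
  have hng : Summable fun n => ‖g n‖ := by
    refine hgeom.of_nonneg_of_le (fun n => norm_nonneg _) (fun n => ?_)
    rw [hgdef]; simp only [norm_mul, norm_pow]
    have h1 : ‖(if D ≤ n then (F (M + n - D) : ℂ) else 0)‖ ≤ 1 := by
      split
      · rw [Complex.norm_real, Real.norm_eq_abs, abs_le]
        exact ⟨by linarith [(hF01 (M + n - D)).1], (hF01 (M + n - D)).2⟩
      · simp
    calc ‖(if D ≤ n then (F (M + n - D) : ℂ) else 0)‖ * ‖s‖ ^ n
        ≤ 1 * ‖s‖ ^ n := mul_le_mul_of_nonneg_right h1 (by positivity)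
      _ = ‖s‖ ^ n := one_mul _
  have hsg : Summable g := hng.of_norm
  have hshift : (∑' n, a n) * s ^ D = ∑' n, g n := by
    have h1 : ∀ i < D, g i = 0 := by
      intro i hi
      rw [hgdef]
      simp [Nat.not_le.mpr hi]
    have h2 : (fun n => g (n + D)) = fun n => a n * s ^ D := by
      funext n
      simp only [hgdef, ha]
      have hle : D ≤ n + D := Nat.le_add_left _ _
      rw [if_pos hle]
      have : M + ((n : ℤ) + (D : ℤ)) - (D : ℤ) = M + n := by ring
      push_cast
      rw [this, pow_add]
      ring
    have h3 := Summable.sum_add_tsum_nat_add D hsg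
    rw [Finset.sum_eq_zero (fun i hi => h1 i (Finset.mem_range.mp hi)), zero_add] at h3
    rw [← h3, h2, tsum_mul_right]
  -- key cancellation for n ≥ D
  have hcg : ∀ n, D ≤ n → c n = g n := by
    intro n hn
    have hx : M ≤ M + (n : ℤ) - D := by omega
    have hrec := hFrec (M + (n : ℤ) - D) hx
    have hxD : M + (n : ℤ) - D + D = M + n := by ring
    rw [hxD] at hrec
    -- reindex the Icc sum as a range sum
    have hre : ∑ j ∈ Finset.Icc M (M + (n : ℤ)), f (M + (n : ℤ) - D - j) * F j
        = ∑ k ∈ Finset.range (n + 1), f ((n : ℤ) - k - D) * F (M + k) := by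
      refine Finset.sum_nbij' (fun j => (j - M).toNat) (fun k => M + (k : ℤ)) ?_ ?_ ?_ ?_ ?_
      · intro j hj
        simp only [Finset.mem_Icc] at hj
        simp only [Finset.mem_range]
        omega
      · intro k hk
        simp only [Finset.mem_range] at hk
        simp only [Finset.mem_Icc]
        omega
      · intro j hj
        simp only [Finset.mem_Icc] at hj
        beta_reduce
        omega
      · intro k hk
        simp only [Finset.mem_range] at hk
        beta_reduce
        omega
      · intro j hj
        simp only [Finset.mem_Icc] at hj
        beta_reduce
        have h1 : (((j - M).toNat : ℤ)) = j - M := by omega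
        rw [h1]
        congr 2 <;> ring_nf <;> omega
    rw [hre] at hrec
    simp only [hcdef, hgdef]
    rw [if_pos hn]
    have hterm : ∀ k ∈ Finset.range (n + 1),
        a k * b (n - k) = ((f ((n : ℤ) - k - D) * F (M + k) : ℝ) : ℂ) * s ^ n := by
      intro k hk
      have hkn : k ≤ n := Nat.lt_succ_iff.mp (Finset.mem_range.mp hk)
      simp only [ha, hb]
      have hcast : ((n - k : ℕ) : ℤ) = (n : ℤ) - k := by omega
      rw [hcast]
      have hpow : s ^ k * s ^ (n - k) = s ^ n := by
        rw [← pow_add]; congr 1; omega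
      push_cast
      calc (F (M + k) : ℂ) * s ^ k * ((f ((n : ℤ) - k - D) : ℂ) * s ^ (n - k))
          = (f ((n : ℤ) - k - D) : ℂ) * (F (M + k) : ℂ) * (s ^ k * s ^ (n - k)) := by ring
        _ = (f ((n : ℤ) - k - D) : ℂ) * (F (M + k) : ℂ) * s ^ n := by rw [hpow]
    rw [Finset.sum_congr rfl hterm, ← Finset.sum_mul, ← Complex.ofReal_sum, ← hrec]
  -- put everything together: LHS = ∑_{n<D} c n
  have hL : (∑' j : ℕ, (F (M + j) : ℂ) * s ^ j) * s ^ D *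
      ((∑' k : ℕ, (f ((k : ℤ) - D) : ℂ) * s ^ ((k : ℤ) - D)) - 1)
      = ∑ n ∈ Finset.range D, c n := by
    rw [hG]
    have : (∑' n, a n) * s ^ D * ((∑' k, b k) * (s ^ D)⁻¹ - 1)
        = (∑' n, a n) * (∑' n, b n) - (∑' n, a n) * s ^ D := by
      field_simp
    rw [show (∑' j : ℕ, (F (M + j) : ℂ) * s ^ j) = ∑' n, a n from rfl, this, hprod, hshift,
      ← Summable.tsum_sub hsc hsg]
    have hsupp : ∀ n ∉ Finset.range D, c n - g n = 0 := by
      intro n hn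
      have : D ≤ n := Nat.not_lt.mp (fun h => hn (Finset.mem_range.mpr h))
      rw [hcg n this, sub_self]
    rw [tsum_eq_sum hsupp]
    refine Finset.sum_congr rfl (fun n hn => ?_)
    have hnD : n < D := Finset.mem_range.mp hn
    simp only [hgdef]
    simp [Nat.not_le.mpr hnD]
  rw [hL]
  -- finite combinatorial identity
  have hab : ∀ n k : ℕ, k ≤ n →
      a k * b (n - k) = (F (M + k) : ℂ) * ((f ((n : ℤ) - k - D) : ℂ) * s ^ n) := by
    intro n k hkn
    simp only [ha, hb]
    have hcast : ((n - k : ℕ) : ℤ) = (n : ℤ) - k := by omega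
    rw [hcast]
    have hpow : s ^ k * s ^ (n - k) = s ^ n := by
      rw [← pow_add]; congr 1; omega
    calc (F (M + k) : ℂ) * s ^ k * ((f ((n : ℤ) - k - D) : ℂ) * s ^ (n - k))
        = (F (M + k) : ℂ) * (f ((n : ℤ) - k - D) : ℂ) * (s ^ k * s ^ (n - k)) := by ring
      _ = (F (M + k) : ℂ) * ((f ((n : ℤ) - k - D) : ℂ) * s ^ n) := by rw [hpow]; ring
  calc ∑ n ∈ Finset.range D, c n
      = ∑ n ∈ Finset.range D, ∑ k ∈ Finset.range (n + 1),
          (F (M + k) : ℂ) * ((f ((n : ℤ) - k - D) : ℂ) * s ^ n) := by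
        refine Finset.sum_congr rfl fun n _ => Finset.sum_congr rfl fun k hk => ?_
        exact hab n k (Nat.lt_succ_iff.mp (Finset.mem_range.mp hk))
    _ = ∑ k ∈ Finset.range D, ∑ n ∈ Finset.Icc k (D - 1),
          (F (M + k) : ℂ) * ((f ((n : ℤ) - k - D) : ℂ) * s ^ n) := by
        refine Finset.sum_comm' fun n k => ?_
        simp only [Finset.mem_range, Finset.mem_Icc]
        omega
    _ = ∑ j ∈ Finset.Icc M (M + D - 1), (F j : ℂ) *
          ∑ x ∈ Finset.Icc j (M + D - 1), (f (x - D - j) : ℂ) * s ^ (x - M) := by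
        refine Finset.sum_nbij' (fun k => M + (k : ℤ)) (fun j => (j - M).toNat) ?_ ?_ ?_ ?_ ?_
        · intro k hk
          simp only [Finset.mem_range] at hk
          simp only [Finset.mem_Icc]
          omega
        · intro j hj
          simp only [Finset.mem_Icc] at hj
          simp only [Finset.mem_range]
          omega
        · intro k hk
          simp only [Finset.mem_range] at hk
          beta_reduce
          omega
        · intro j hj
          simp only [Finset.mem_Icc] at hj
          beta_reduce
          omega
        · intro k hk
          simp only [Finset.mem_range] at hk
          beta_reduce
          rw [Finset.mul_sum]
          refine Finset.sum_nbij' (fun n => M + (n : ℤ)) (fun x => (x - M).toNat) ?_ ?_ ?_ ?_ ?_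
          · intro n hn
            simp only [Finset.mem_Icc] at hn ⊢
            omega
          · intro x hx
            simp only [Finset.mem_Icc] at hx ⊢
            omega
          · intro n hn
            simp only [Finset.mem_Icc] at hn
            beta_reduce
            omega
          · intro x hx
            simp only [Finset.mem_Icc] at hx
            beta_reduce
            omega
          · intro n hn
            simp only [Finset.mem_Icc] at hn
            beta_reduce
            have h1 : M + (n : ℤ) - D - (M + (k : ℤ)) = (n : ℤ) - k - D := by ring
            have h2 : M + (n : ℤ) - M = (n : ℤ) := by ring
            rw [h1, h2, zpow_natCast]
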